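/- Stochastic envy-freeness and likelihood envy-freeness are incompatible: there exists an instance of the assignment problem with uncertain priorities (a number of agents, items, strict agent preferences, and a finitely supported random priority Σ) such that no random assignment satisfies both SEF and LEF. -/

import Mathlib

open Finset

/-- `X` stochastically dominates `Y` under the ranking `π` (a bijection from items to ranks):
for every rank `t`, the cumulative probability of the `t` most-preferred items is at least
as large under `X` as under `Y`. -/
def SD {m : ℕ} (π : Equiv.Perm (Fin m)) (X Y : Fin m → ℝ) : Prop :=
  ∀ t : Fin m, ∑ r ∈ Finset.Iic t, Y (π.symm r) ≤ ∑ r ∈ Finset.Iic t, X (π.symm r)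

/-- A random assignment: an `n × m` matrix of nonnegative reals, each row summing to `1`
and each column summing to at most `1`. -/
def IsRandomAssignment {n m : ℕ} (P : Fin n → Fin m → ℝ) : Prop :=
  (∀ i j, 0 ≤ P i j) ∧ (∀ i, ∑ j, P i j = 1) ∧ (∀ j, ∑ i, P i j ≤ 1)

/-- A random priority: a (finitely supported) probability distribution over simple priorities
(bijections from agents to ranks). -/
def IsRandomPriority {n : ℕ} (ρ : Equiv.Perm (Fin n) → ℝ) : Prop :=
  (∀ σ, 0 ≤ ρ σ) ∧ (∑ σ, ρ σ = 1)

/-- A lottery: a probability distribution over simple assignments (injective maps from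
agents to items). -/
def IsLottery {n m : ℕ} (L : (Fin n → Fin m) → ℝ) : Prop :=
  (∀ f, 0 ≤ L f) ∧ (∑ f, L f = 1) ∧ (∀ f, L f ≠ 0 → Function.Injective f)

/-- The random assignment induced by a lottery: `p i j = Pr_{f ∼ L}[f i = j]`. -/
def induced {n m : ℕ} (L : (Fin n → Fin m) → ℝ) : Fin n → Fin m → ℝ :=
  fun i j => ∑ f ∈ Finset.univ.filter (fun f => f i = j), L f

/-- `rankDist ρ i r = Pr_{σ ∼ Σ}[σ i = r]`, agent `i`'s rank distribution. -/
def rankDist {n : ℕ} (ρ : Equiv.Perm (Fin n) → ℝ) (i r : Fin n) : ℝ :=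
  ∑ σ ∈ Finset.univ.filter (fun σ => σ i = r), ρ σ

/-- Ordinal efficiency: no other random assignment stochastically dominates `P`
for every agent. -/
def OE {n m : ℕ} (π : Fin n → Equiv.Perm (Fin m)) (P : Fin n → Fin m → ℝ) : Prop :=
  ¬ ∃ Q : Fin n → Fin m → ℝ, IsRandomAssignment Q ∧ Q ≠ P ∧ ∀ i, SD (π i) (Q i) (P i)

/-- Stochastic envy-freeness: whenever `i`'s rank distribution (cumulatively)
stochastically dominates `j`'s, agent `i`'s allocation stochastically dominates `j`'s
under `i`'s preferences. -/
def SEF {n m : ℕ} (π : Fin n → Equiv.Perm (Fin m)) (ρ : Equiv.Perm (Fin n) → ℝ)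
    (P : Fin n → Fin m → ℝ) : Prop :=
  ∀ i j : Fin n,
    (∀ t : Fin n, ∑ r ∈ Finset.Iic t, rankDist ρ j r ≤ ∑ r ∈ Finset.Iic t, rankDist ρ i r) →
    SD (π i) (P i) (P j)

/-- `Pr_{σ ∼ Σ}[σ i < σ j]`: the probability that agent `i` has higher priority than `j`. -/
def prHigher {n : ℕ} (ρ : Equiv.Perm (Fin n) → ℝ) (i j : Fin n) : ℝ :=
  ∑ σ ∈ Finset.univ.filter (fun σ => σ i < σ j), ρ σ

/-- `Pr_{f ∼ L}[f i ≻_i f j]`: the probability that agent `i` prefers her own item to `j`'s. -/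
def prPrefers {n m : ℕ} (π : Fin n → Equiv.Perm (Fin m)) (L : (Fin n → Fin m) → ℝ)
    (i j : Fin n) : ℝ :=
  ∑ f ∈ Finset.univ.filter (fun f => π i (f i) < π i (f j)), L f

/-- Likelihood envy-freeness: some lottery inducing `P` satisfies
`Pr[σ i < σ j] ≤ Pr[f i ≻_i f j]` for all agents `i`, `j`. -/
def LEF {n m : ℕ} (π : Fin n → Equiv.Perm (Fin m)) (ρ : Equiv.Perm (Fin n) → ℝ)
    (P : Fin n → Fin m → ℝ) : Prop :=
  ∃ L : (Fin n → Fin m) → ℝ, IsLottery L ∧ induced L = P ∧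
    ∀ i j : Fin n, prHigher ρ i j ≤ prPrefers π L i j

/-- 1-LEF: some lottery inducing `P` satisfies: whenever `i` has higher priority than `j`
with probability `1`, agent `i` prefers her item to `j`'s with probability `1`. -/
def OneLEF {n m : ℕ} (π : Fin n → Equiv.Perm (Fin m)) (ρ : Equiv.Perm (Fin n) → ℝ)
    (P : Fin n → Fin m → ℝ) : Prop :=
  ∃ L : (Fin n → Fin m) → ℝ, IsLottery L ∧ induced L = P ∧
    ∀ i j : Fin n, i ≠ j → prHigher ρ i j = 1 → prPrefers π L i j = 1

/-- The baseline allocation of agent `i`: she gets her `r`-th preferred item with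
probability `Pr[σ i = r]` (ranks beyond `n` get probability `0`). -/
def baseline {n m : ℕ} (π : Fin n → Equiv.Perm (Fin m)) (ρ : Equiv.Perm (Fin n) → ℝ)
    (i : Fin n) (j : Fin m) : ℝ :=
  ∑ σ ∈ Finset.univ.filter (fun σ => (σ i : ℕ) = (π i j : ℕ)), ρ σ

/-- Ranked proportionality: every agent's allocation stochastically dominates
her baseline allocation. -/
def PROP {n m : ℕ} (π : Fin n → Equiv.Perm (Fin m)) (ρ : Equiv.Perm (Fin n) → ℝ)
    (P : Fin n → Fin m → ℝ) : Prop :=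
  ∀ i : Fin n, SD (π i) (P i) (baseline π ρ i)

/-- Pareto efficiency of a simple assignment: no injective assignment makes every agent
weakly better off and some agent strictly better off. -/
def ParetoEff {n m : ℕ} (π : Fin n → Equiv.Perm (Fin m)) (f : Fin n → Fin m) : Prop :=
  ¬ ∃ g : Fin n → Fin m, Function.Injective g ∧
      (∀ i, g i = f i ∨ π i (g i) < π i (f i)) ∧ (∃ i, π i (g i) < π i (f i))

/-- Envy-freeness of a simple assignment with respect to a simple priority. -/
def EnvyFree {n m : ℕ} (π : Fin n → Equiv.Perm (Fin m)) (σ : Equiv.Perm (Fin n))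
    (f : Fin n → Fin m) : Prop :=
  ∀ i j : Fin n, σ i < σ j → π i (f i) < π i (f j)

noncomputable def myρ : Equiv.Perm (Fin 3) → ℝ :=
  fun σ => (if σ = Equiv.swap 1 2 then 1/2 else 0) + (if σ = Equiv.swap 0 2 then 1/2 else 0)

def myπ : Fin 3 → Equiv.Perm (Fin 3) := ![1, 1, Equiv.swap 1 2]

lemma sum_myρ (p : Equiv.Perm (Fin 3) → Prop) [DecidablePred p] :
    ∑ σ ∈ Finset.univ.filter p, myρ σ =
      (if p (Equiv.swap 1 2) then (1:ℝ)/2 else 0) + (if p (Equiv.swap 0 2) then 1/2 else 0) := by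
  unfold myρ
  rw [Finset.sum_add_distrib, Finset.sum_ite_eq' _ (Equiv.swap 1 2),
    Finset.sum_ite_eq' _ (Equiv.swap 0 2)]
  simp [Finset.mem_filter]

def gZ (f : Fin 3 → Fin 3) : ℤ :=
  (if myπ 0 (f 0) < myπ 0 (f 2) then 1 else 0) + 2 * (if myπ 1 (f 1) < myπ 1 (f 0) then 1 else 0)
    + ((if f 0 = 0 then 1 else 0) + (if f 0 = 1 then 1 else 0))
    - ((if f 1 = 0 then 1 else 0) + (if f 1 = 1 then 1 else 0))
    - 3 * (if ¬ (myπ 2 (f 2) < myπ 2 (f 1)) then 1 else 0)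

lemma gZ_le : ∀ f : Fin 3 → Fin 3, Function.Injective f → gZ f ≤ 1 := by decide


/-- **Theorem.** SEF and LEF are incompatible: there is an instance such that no random
assignment satisfies both. -/
theorem SEF_LEF_incompatible :
    ∃ (n m : ℕ), n ≤ m ∧
      ∃ (π : Fin n → Equiv.Perm (Fin m)) (ρ : Equiv.Perm (Fin n) → ℝ),
        IsRandomPriority ρ ∧
        ∀ P : Fin n → Fin m → ℝ, IsRandomAssignment P → ¬ (SEF π ρ P ∧ LEF π ρ P) := by
  refine ⟨3, 3, le_refl 3, myπ, myρ, ⟨?_, ?_⟩, ?_⟩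
  · intro σ; unfold myρ; split_ifs <;> norm_num
  · unfold myρ
    rw [Finset.sum_add_distrib, Finset.sum_ite_eq' _ (Equiv.swap 1 2),
      Finset.sum_ite_eq' _ (Equiv.swap 0 2)]
    norm_num
  rintro P _hP ⟨hSEF, L, ⟨hL0, hL1, hLinj⟩, hind, hLEF⟩
  -- rank distributions
  have hrd : ∀ i r : Fin 3, rankDist myρ i r =
      (if Equiv.swap 1 2 i = r then (1:ℝ)/2 else 0) + (if Equiv.swap 0 2 i = r then 1/2 else 0) :=
    fun i r => sum_myρ _
  -- dominance premise for the pair (0,1)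
  have h01 : ∀ t : Fin 3, ∑ r ∈ Finset.Iic t, rankDist myρ 1 r ≤
      ∑ r ∈ Finset.Iic t, rankDist myρ 0 r := by
    intro t
    fin_cases t
    · show ∑ r ∈ Finset.Iic (0:Fin 3), rankDist myρ 1 r ≤ ∑ r ∈ Finset.Iic (0:Fin 3), rankDist myρ 0 r
      rw [show (Finset.Iic (0:Fin 3)) = {0} from by decide]
      simp [hrd, Equiv.swap_apply_def]
    · show ∑ r ∈ Finset.Iic (1:Fin 3), rankDist myρ 1 r ≤ ∑ r ∈ Finset.Iic (1:Fin 3), rankDist myρ 0 r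
      rw [show (Finset.Iic (1:Fin 3)) = {0, 1} from by decide,
        Finset.sum_pair (by decide), Finset.sum_pair (by decide)]
      simp [hrd, Equiv.swap_apply_def]
    · show ∑ r ∈ Finset.Iic (2:Fin 3), rankDist myρ 1 r ≤ ∑ r ∈ Finset.Iic (2:Fin 3), rankDist myρ 0 r
      rw [show (Finset.Iic (2:Fin 3)) = {0, 1, 2} from by decide]
      rw [show ({0,1,2} : Finset (Fin 3)) = insert 0 {1,2} from rfl,
        Finset.sum_insert (by decide), Finset.sum_insert (by decide)]
      simp [hrd, Equiv.swap_apply_def]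
  -- SEF conclusion for the pair (0,1) at rank threshold 1
  have hSD := hSEF 0 1 h01
  have key1 : P 1 0 + P 1 1 ≤ P 0 0 + P 0 1 := by
    have h := hSD 1
    rw [show (Finset.Iic (1:Fin 3)) = {0, 1} from by decide,
      Finset.sum_pair (by decide), Finset.sum_pair (by decide)] at h
    simpa [myπ, Equiv.Perm.one_symm] using h
  -- prHigher computations
  have hpr : ∀ i j : Fin 3, prHigher myρ i j =
      (if Equiv.swap 1 2 i < Equiv.swap 1 2 j then (1:ℝ)/2 else 0) +
      (if Equiv.swap 0 2 i < Equiv.swap 0 2 j then 1/2 else 0) :=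
    fun i j => sum_myρ _
  have hA : (1:ℝ)/2 ≤ ∑ f : Fin 3 → Fin 3, (if myπ 0 (f 0) < myπ 0 (f 2) then L f else 0) := by
    have h := hLEF 0 2
    rw [hpr, prPrefers, Finset.sum_filter, if_pos (by decide), if_neg (by decide)] at h
    linarith
  have hB : (1:ℝ)/2 ≤ ∑ f : Fin 3 → Fin 3, (if myπ 1 (f 1) < myπ 1 (f 0) then L f else 0) := by
    have h := hLEF 1 0
    rw [hpr, prPrefers, Finset.sum_filter, if_neg (by decide), if_pos (by decide)] at h
    linarith
  have hC : (1:ℝ) ≤ ∑ f : Fin 3 → Fin 3, (if myπ 2 (f 2) < myπ 2 (f 1) then L f else 0) := by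
    have h := hLEF 2 1
    rw [hpr, prPrefers, Finset.sum_filter, if_pos (by decide), if_pos (by decide)] at h
    linarith
  -- the complement of the event in hC has probability ≤ 0
  have hCsplit : ∑ f : Fin 3 → Fin 3, (if myπ 2 (f 2) < myπ 2 (f 1) then L f else 0) +
      ∑ f : Fin 3 → Fin 3, (if ¬ (myπ 2 (f 2) < myπ 2 (f 1)) then L f else 0) = 1 := by
    rw [← Finset.sum_add_distrib, ← hL1]
    refine Finset.sum_congr rfl fun f _ => ?_
    by_cases h : myπ 2 (f 2) < myπ 2 (f 1) <;> simp [h]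
  have hnotC : ∑ f : Fin 3 → Fin 3, (if ¬ (myπ 2 (f 2) < myπ 2 (f 1)) then L f else 0) ≤ 0 := by
    linarith
  -- entries of P as sums
  have hPij : ∀ i j : Fin 3, P i j = ∑ f : Fin 3 → Fin 3, (if f i = j then L f else 0) := by
    intro i j
    rw [← hind, induced, Finset.sum_filter]
  -- the master sum
  have hmaster : ∑ f : Fin 3 → Fin 3, L f * ((gZ f : ℤ) : ℝ) ≤ 1 := by
    rw [← hL1]
    refine Finset.sum_le_sum fun f _ => ?_
    by_cases h0 : L f = 0
    · simp [h0]
    · have hkey : ((gZ f : ℤ) : ℝ) ≤ 1 := by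
        exact_mod_cast gZ_le f (hLinj f h0)
      calc L f * ((gZ f : ℤ) : ℝ) ≤ L f * 1 := by
            exact mul_le_mul_of_nonneg_left hkey (hL0 f)
        _ = L f := mul_one _
  have hexpand : ∑ f : Fin 3 → Fin 3, L f * ((gZ f : ℤ) : ℝ) =
      (∑ f : Fin 3 → Fin 3, (if myπ 0 (f 0) < myπ 0 (f 2) then L f else 0))
      + 2 * (∑ f : Fin 3 → Fin 3, (if myπ 1 (f 1) < myπ 1 (f 0) then L f else 0))
      + ((∑ f : Fin 3 → Fin 3, (if f 0 = 0 then L f else 0))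
          + (∑ f : Fin 3 → Fin 3, (if f 0 = 1 then L f else 0)))
      - ((∑ f : Fin 3 → Fin 3, (if f 1 = 0 then L f else 0))
          + (∑ f : Fin 3 → Fin 3, (if f 1 = 1 then L f else 0)))
      - 3 * (∑ f : Fin 3 → Fin 3, (if ¬ (myπ 2 (f 2) < myπ 2 (f 1)) then L f else 0)) := by
    simp only [Finset.mul_sum, ← Finset.sum_add_distrib, ← Finset.sum_sub_distrib]
    refine Finset.sum_congr rfl fun f _ => ?_
    unfold gZ
    push_cast
    split_ifs <;> ring
  rw [hexpand] at hmaster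
  rw [hPij 1 0, hPij 1 1, hPij 0 0, hPij 0 1] at key1
  linarith
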